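/- Define H(μ, m) = (1/2)·log(σ_R² + σ²(μ)/m) for m > 0, where σ_R² > 0 is constant and σ² : ℝ → ℝ is a differentiable, non-negative, non-decreasing function. Then the mixed partial derivative satisfies ∂²H/∂m∂μ = −(σ_R² / (2·m²·(σ_R² + σ²(μ)/m)²))·(dσ²/dμ) ≤ 0 for all μ and all m > 0. -/

import Mathlib

open Real

theorem mixed_partial_of_sensory_entropy_nonpos
    (σR2 : ℝ) (hσR2 : 0 < σR2)
    (σ2 : ℝ → ℝ) (hdiff : Differentiable ℝ σ2)
    (hnonneg : ∀ μ, 0 ≤ σ2 μ) (hmono : Monotone σ2)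
    (H : ℝ → ℝ → ℝ)
    (hH : H = fun μ m => (1 / 2) * Real.log (σR2 + σ2 μ / m))
    (μ m : ℝ) (hm : 0 < m) :
    deriv (fun μ' => deriv (fun m' => H μ' m') m) μ =
        -(σR2 / (2 * m ^ 2 * (σR2 + σ2 μ / m) ^ 2)) * deriv σ2 μ ∧
      deriv (fun μ' => deriv (fun m' => H μ' m') m) μ ≤ 0 := by
  subst hH
  have hm' : m ≠ 0 := hm.ne'
  -- positivity of the log argument for any μ'
  have hDpos : ∀ μ', 0 < σR2 + σ2 μ' / m := fun μ' =>
    add_pos_of_pos_of_nonneg hσR2 (div_nonneg (hnonneg μ') hm.le)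
  -- step 1: inner derivative
  have hinner : ∀ μ', deriv (fun m' => (1 / 2 : ℝ) * Real.log (σR2 + σ2 μ' / m')) m
      = -(σ2 μ') / (2 * m ^ 2 * (σR2 + σ2 μ' / m)) := by
    intro μ'
    have h1 : HasDerivAt (fun m' : ℝ => σR2 + σ2 μ' / m')
        (σ2 μ' * -((m ^ 2)⁻¹)) m := by
      simpa [div_eq_mul_inv] using ((hasDerivAt_inv hm').const_mul (σ2 μ')).const_add σR2
    have h2 := (h1.log (hDpos μ').ne').const_mul (1 / 2 : ℝ)
    rw [h2.deriv]
    have hD := (hDpos μ').ne'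
    field_simp
  have hfun : (fun μ' => deriv (fun m' => (1 / 2 : ℝ) * Real.log (σR2 + σ2 μ' / m')) m)
      = fun μ' => -(σ2 μ') / (2 * m ^ 2 * (σR2 + σ2 μ' / m)) := funext hinner
  -- step 2: outer derivative
  have hden : ∀ μ', (2 * m ^ 2 * (σR2 + σ2 μ' / m)) ≠ 0 := fun μ' =>
    mul_ne_zero (by positivity) (hDpos μ').ne'
  have hu : HasDerivAt σ2 (deriv σ2 μ) μ := (hdiff μ).hasDerivAt
  have hnum : HasDerivAt (fun μ' => -(σ2 μ')) (-(deriv σ2 μ)) μ := hu.neg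
  have hden' : HasDerivAt (fun μ' => 2 * m ^ 2 * (σR2 + σ2 μ' / m))
      (2 * m ^ 2 * (deriv σ2 μ / m)) μ := by
    simpa using ((hu.div_const m).const_add σR2).const_mul (2 * m ^ 2)
  have hdiv : HasDerivAt (fun μ' => -(σ2 μ') / (2 * m ^ 2 * (σR2 + σ2 μ' / m))) _ μ :=
    hnum.div hden' (hden μ)
  have hderiv : deriv (fun μ' => deriv (fun m' =>
      (1 / 2 : ℝ) * Real.log (σR2 + σ2 μ' / m')) m) μ
      = -(σR2 / (2 * m ^ 2 * (σR2 + σ2 μ / m) ^ 2)) * deriv σ2 μ := by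
    rw [hfun, hdiv.deriv]
    have hEpos : 0 < m * σR2 + σ2 μ := add_pos_of_pos_of_nonneg (mul_pos hm hσR2) (hnonneg μ)
    have hE : σR2 + σ2 μ / m = (m * σR2 + σ2 μ) / m := by field_simp
    rw [hE]
    field_simp [hEpos.ne']
    ring
  -- deriv σ2 μ ≥ 0 from monotonicity
  have hd0 : 0 ≤ deriv σ2 μ := by
    have htend : Filter.Tendsto (slope σ2 μ) (nhdsWithin μ (Set.Ioi μ)) (nhds (deriv σ2 μ)) :=
      (hasDerivAt_iff_tendsto_slope.mp hu).mono_left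
        (nhdsWithin_mono μ (fun x hx => ne_of_gt hx))
    refine ge_of_tendsto htend ?_
    filter_upwards [self_mem_nhdsWithin] with x hx
    have hx' : (μ:ℝ) < x := hx
    rw [slope_def_field]
    exact div_nonneg (sub_nonneg.mpr (hmono hx'.le)) (sub_nonneg.mpr hx'.le)
  refine ⟨hderiv, ?_⟩
  rw [hderiv]
  have : 0 ≤ σR2 / (2 * m ^ 2 * (σR2 + σ2 μ / m) ^ 2) := by positivity
  nlinarith
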